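/- Let m ≥ 0 be an integer, β > 0, and let p be a polynomial of degree at most m with real coefficients such that p(x) ≥ 0 for all x ∈ [−1, 1] and ∫_{−1}^{1} p(x) dx ≤ β. Then for every x ∈ [−1, 1], p(x) ≤ β·(m+1)³·(√2 + 1)^m. -/

import Mathlib

open MeasureTheory
open MeasureTheory Polynomial Real

lemma cheb_facts : ∀ n : ℕ, (Polynomial.Chebyshev.T ℝ (n:ℤ)).natDegree ≤ n ∧
    (Polynomial.Chebyshev.T ℝ (n:ℤ)).coeff n = 2^(n-1) := by
  intro n
  induction n using Nat.strong_induction_on with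
  | _ n ih =>
    match n with
    | 0 => simp [Polynomial.Chebyshev.T_zero]
    | 1 => simp [Polynomial.Chebyshev.T_one]
    | (k+2) =>
      have h1 := ih (k+1) (by omega)
      have h0 := ih k (by omega)
      have hrec : Polynomial.Chebyshev.T ℝ ((k+2:ℕ):ℤ) =
          Polynomial.C 2 * (Polynomial.X * Polynomial.Chebyshev.T ℝ ((k+1:ℕ):ℤ))
            - Polynomial.Chebyshev.T ℝ (k:ℤ) := by
        push_cast
        have := Polynomial.Chebyshev.T_add_two ℝ (k:ℤ)
        rw [this]
        rw [show (Polynomial.C 2 : ℝ[X]) = 2 from by norm_cast]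
        ring
      rw [hrec]
      constructor
      · apply le_trans (Polynomial.natDegree_sub_le _ _)
        simp only [max_le_iff]
        refine ⟨le_trans Polynomial.natDegree_mul_le ?_, le_trans h0.1 (by omega)⟩
        have h2 : (Polynomial.X * Polynomial.Chebyshev.T ℝ ((k+1:ℕ):ℤ)).natDegree ≤ 1 + (k+1) :=
          le_trans Polynomial.natDegree_mul_le (by simpa using h1.1)
        simpa using le_trans (add_le_add (Polynomial.natDegree_C (2:ℝ)).le h2) (by omega)
      · rw [Polynomial.coeff_sub, Polynomial.coeff_C_mul,
          Polynomial.coeff_eq_zero_of_natDegree_lt (lt_of_le_of_lt h0.1 (by omega)),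
          show k+2 = (k+1)+1 from rfl, Polynomial.coeff_X_mul, h1.2]
        simp [pow_succ]; ring

lemma cheb_basis : ∀ (m : ℕ) (p : ℝ[X]), p.natDegree ≤ m →
    ∃ c : ℕ → ℝ, p = ∑ j ∈ Finset.range (m+1), Polynomial.C (c j) * Polynomial.Chebyshev.T ℝ (j:ℤ) := by
  intro m
  induction m with
  | zero =>
    intro p hp
    refine ⟨fun _ => p.coeff 0, ?_⟩
    rw [Polynomial.eq_C_of_natDegree_le_zero hp]
    simp [Polynomial.Chebyshev.T_zero]
  | succ m ih =>
    intro p hp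
    set a : ℝ := p.coeff (m+1) / 2^m with ha
    set q : ℝ[X] := p - Polynomial.C a * Polynomial.Chebyshev.T ℝ ((m+1:ℕ):ℤ) with hq
    have hqdeg : q.natDegree ≤ m := by
      rw [Polynomial.natDegree_le_iff_coeff_eq_zero]
      intro N hN
      rcases eq_or_lt_of_le (Nat.succ_le_of_lt hN) with h | h
      · -- N = m+1
        rw [hq, Polynomial.coeff_sub, Polynomial.coeff_C_mul, ← h, (cheb_facts (m+1)).2]
        rw [ha]
        field_simp
        simp
      · rw [hq, Polynomial.coeff_sub, Polynomial.coeff_C_mul,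
          Polynomial.coeff_eq_zero_of_natDegree_lt (lt_of_le_of_lt hp h),
          Polynomial.coeff_eq_zero_of_natDegree_lt (lt_of_le_of_lt (cheb_facts (m+1)).1 h)]
        ring
    obtain ⟨c, hc⟩ := ih q hqdeg
    refine ⟨fun j => if j = m+1 then a else c j, ?_⟩
    rw [Finset.sum_range_succ]
    simp only [eq_self_iff_true, if_true]
    have : ∑ j ∈ Finset.range (m+1), Polynomial.C (if j = m+1 then a else c j) * Polynomial.Chebyshev.T ℝ (j:ℤ)
        = ∑ j ∈ Finset.range (m+1), Polynomial.C (c j) * Polynomial.Chebyshev.T ℝ (j:ℤ) := by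
      apply Finset.sum_congr rfl
      intro j hj
      rw [if_neg (by simp at hj; omega)]
    rw [this, ← hc, hq, sub_add_cancel]

lemma integral_cos_int (a : ℤ) : ∫ θ in (0:ℝ)..π, Real.cos (a*θ) = if a = 0 then π else 0 := by
  rcases eq_or_ne a 0 with h | h
  · simp [h, Real.pi_pos.le]
  · rw [if_neg h]
    have : ∫ θ in (0:ℝ)..π, Real.cos ((a:ℝ)*θ) =
        (a:ℝ)⁻¹ • ∫ θ in ((a:ℝ)*0)..((a:ℝ)*π), Real.cos θ :=
      intervalIntegral.integral_comp_mul_left Real.cos (by exact_mod_cast h)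
    rw [this, integral_cos]
    simp [Real.sin_int_mul_pi]

lemma orth (j k : ℕ) : ∫ θ in (0:ℝ)..π, Real.cos (j*θ) * Real.cos (k*θ) =
    if j = k then (if j = 0 then π else π/2) else 0 := by
  have hident : ∀ θ : ℝ, Real.cos (j*θ) * Real.cos (k*θ)
      = (Real.cos ((((j:ℤ)+k):ℤ)*θ) + Real.cos ((((j:ℤ)-k):ℤ)*θ))/2 := by
    intro θ
    push_cast
    rw [show ((j:ℝ)+k)*θ = (j:ℝ)*θ + k*θ from by ring, show ((j:ℝ)-k)*θ = (j:ℝ)*θ - k*θ from by ring,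
      Real.cos_add, Real.cos_sub]
    ring
  rw [intervalIntegral.integral_congr (fun θ _ => hident θ)]
  have h1 : IntervalIntegrable (fun θ => Real.cos ((((j:ℤ)+k):ℤ)*θ)) volume 0 π :=
    (Real.continuous_cos.comp (continuous_const.mul continuous_id)).intervalIntegrable _ _
  have h2 : IntervalIntegrable (fun θ => Real.cos ((((j:ℤ)-k):ℤ)*θ)) volume 0 π :=
    (Real.continuous_cos.comp (continuous_const.mul continuous_id)).intervalIntegrable _ _
  rw [show (fun θ => (Real.cos ((((j:ℤ)+k):ℤ)*θ) + Real.cos ((((j:ℤ)-k):ℤ)*θ))/2)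
      = fun θ => (Real.cos ((((j:ℤ)+k):ℤ)*θ) + Real.cos ((((j:ℤ)-k):ℤ)*θ)) * (1/2) from by
    funext θ; ring]
  rw [intervalIntegral.integral_mul_const, intervalIntegral.integral_add h1 h2,
    integral_cos_int, integral_cos_int]
  rcases eq_or_ne j k with h | h
  · subst h
    rcases eq_or_ne j 0 with h0 | h0 <;> simp [h0] <;> ring
  · have hjk : (j:ℤ) - k ≠ 0 := by omega
    rcases eq_or_ne ((j:ℤ)+k) 0 with h0 | h0
    · exact absurd (by omega : j = k) h
    · rw [if_neg h, if_neg h0, if_neg hjk]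
      ring
set_option maxHeartbeats 2000000 in
theorem stmt13 (m : ℕ) (β : ℝ) (hβ : 0 < β) (p : Polynomial ℝ) (hdeg : p.natDegree ≤ m)
    (hnonneg : ∀ x ∈ Set.Icc (-1 : ℝ) 1, 0 ≤ p.eval x)
    (hint : (∫ x in (-1 : ℝ)..1, p.eval x) ≤ β) :
    ∀ x ∈ Set.Icc (-1 : ℝ) 1, p.eval x ≤ β * ((m : ℝ) + 1) ^ 3 * (Real.sqrt 2 + 1) ^ m := by
  rcases Nat.eq_zero_or_pos m with hm0 | hm1
  · -- m = 0 : constant polynomial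
    subst hm0
    intro x hx
    have hpc : p = Polynomial.C (p.coeff 0) := Polynomial.eq_C_of_natDegree_le_zero hdeg
    have h0 : (0:ℝ) ≤ p.coeff 0 := by
      have := hnonneg 0 (by norm_num)
      rwa [hpc, Polynomial.eval_C] at this
    have hi : (∫ x in (-1:ℝ)..1, p.eval x) = 2 * p.coeff 0 := by
      rw [hpc]
      simp only [Polynomial.eval_C]
      rw [intervalIntegral.integral_const]
      norm_num
    rw [hpc, Polynomial.eval_C]
    rw [hi] at hint
    simp only [Nat.cast_zero, pow_zero]
    nlinarith
  -- main case m ≥ 1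
  have hm1' : (2:ℝ) ≤ (m:ℝ) + 1 := by exact_mod_cast Nat.succ_le_succ hm1
  obtain ⟨c, hc⟩ := cheb_basis m p hdeg
  set g : ℝ → ℝ := fun θ => p.eval (Real.cos θ) with hgdef
  have hg : ∀ θ : ℝ, g θ = ∑ j ∈ Finset.range (m+1), c j * Real.cos (j*θ) := by
    intro θ
    rw [hgdef]
    simp only
    rw [hc, Polynomial.eval_finset_sum]
    refine Finset.sum_congr rfl fun j _ => ?_
    rw [Polynomial.eval_mul, Polynomial.eval_C, Polynomial.Chebyshev.T_real_cos]
    norm_num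
  have hgn : ∀ θ : ℝ, 0 ≤ g θ := fun θ =>
    hnonneg _ ⟨Real.neg_one_le_cos θ, Real.cos_le_one θ⟩
  have hgcont : Continuous g := (Polynomial.continuous p).comp Real.continuous_cos
  set I := ∫ θ in (0:ℝ)..π, g θ with hI
  -- coefficient bounds
  have hcc : ∀ a : ℝ, Continuous fun θ : ℝ => Real.cos (a*θ) :=
    fun a => Real.continuous_cos.comp (continuous_const.mul continuous_id)
  have hck : ∀ k, k ≤ m → |c k| ≤ (2/π) * I := by
    intro k _
    set F : ℕ → ℝ → ℝ := fun j θ => c j * (Real.cos (j*θ) * Real.cos (k*θ)) with hF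
    have hval : (∫ θ in (0:ℝ)..π, g θ * Real.cos (k*θ))
        = c k * (if k = 0 then π else π/2) := by
      have he : ∀ θ ∈ Set.uIcc (0:ℝ) π, g θ * Real.cos (k*θ)
          = ∑ j ∈ Finset.range (m+1), F j θ := by
        intro θ _
        rw [hg θ, Finset.sum_mul]
        exact Finset.sum_congr rfl fun j _ => by rw [hF]; ring
      calc (∫ θ in (0:ℝ)..π, g θ * Real.cos (k*θ))
          = ∫ θ in (0:ℝ)..π, ∑ j ∈ Finset.range (m+1), F j θ :=
            intervalIntegral.integral_congr he
        _ = ∑ j ∈ Finset.range (m+1), ∫ θ in (0:ℝ)..π, F j θ :=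
            intervalIntegral.integral_finset_sum (fun j _ =>
              (continuous_const.mul ((hcc j).mul (hcc k))).intervalIntegrable _ _)
        _ = ∑ j ∈ Finset.range (m+1),
              c j * (if j = k then (if j = 0 then π else π/2) else 0) := by
            refine Finset.sum_congr rfl fun j _ => ?_
            rw [hF]
            simp only
            rw [intervalIntegral.integral_const_mul, orth j k]
        _ = c k * (if k = 0 then π else π/2) := by
            rw [Finset.sum_eq_single_of_mem k (Finset.mem_range.2 (by omega))
              (fun j _ hj => by rw [if_neg hj, mul_zero]), if_pos rfl]
    have habs : |∫ θ in (0:ℝ)..π, g θ * Real.cos (k*θ)| ≤ I := by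
      calc |∫ θ in (0:ℝ)..π, g θ * Real.cos (k*θ)|
          ≤ ∫ θ in (0:ℝ)..π, |g θ * Real.cos (k*θ)| :=
            intervalIntegral.abs_integral_le_integral_abs Real.pi_pos.le
        _ ≤ ∫ θ in (0:ℝ)..π, g θ := by
            apply intervalIntegral.integral_mono_on Real.pi_pos.le
              ((hgcont.mul (hcc k)).abs.intervalIntegrable _ _)
              (hgcont.intervalIntegrable _ _)
            intro θ _
            simp only [Pi.mul_apply]
            rw [abs_mul, abs_of_nonneg (hgn θ)]
            exact mul_le_of_le_one_right (hgn θ) (Real.abs_cos_le_one _)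
    have h2 : |c k| * (π/2) ≤ I := by
      rcases eq_or_ne k 0 with h0 | h0
      · rw [hval, h0, if_pos rfl, abs_mul, abs_of_nonneg Real.pi_pos.le] at habs
        nlinarith [abs_nonneg (c k), Real.pi_pos, h0 ▸ habs]
      · rw [hval, if_neg h0, abs_mul] at habs
        rwa [abs_of_nonneg (by positivity : (0:ℝ) ≤ π/2)] at habs
    rw [div_mul_eq_mul_div, le_div_iff₀ Real.pi_pos]
    linarith
  -- pointwise bound by sum of coefficients
  have hsum : ∀ x ∈ Set.Icc (-1:ℝ) 1, p.eval x ≤ ((m:ℝ)+1) * ((2/π) * I) := by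
    intro x hx
    have hxval : p.eval x = ∑ j ∈ Finset.range (m+1), c j * Real.cos (j * Real.arccos x) := by
      rw [show p.eval x = g (Real.arccos x) from by
        rw [hgdef]; simp only; rw [Real.cos_arccos hx.1 hx.2]]
      exact hg _
    rw [hxval]
    calc ∑ j ∈ Finset.range (m+1), c j * Real.cos (j * Real.arccos x)
        ≤ ∑ j ∈ Finset.range (m+1), (2/π) * I := by
          refine Finset.sum_le_sum fun j hj => ?_
          have h1 : c j * Real.cos (j * Real.arccos x) ≤ |c j| := by
            calc c j * Real.cos (j * Real.arccos x) ≤ |c j * Real.cos (j * Real.arccos x)| :=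
                le_abs_self _
            _ = |c j| * |Real.cos (j * Real.arccos x)| := abs_mul _ _
            _ ≤ |c j| * 1 := by
                exact mul_le_mul_of_nonneg_left (Real.abs_cos_le_one _) (abs_nonneg _)
            _ = |c j| := mul_one _
          exact h1.trans (hck j (by simp at hj; omega))
      _ = ((m:ℝ)+1) * ((2/π) * I) := by
          rw [Finset.sum_const, Finset.card_range]
          push_cast
          ring
  -- maximum of p on [-1,1]
  obtain ⟨xs, hxs, hmax⟩ := isCompact_Icc.exists_isMaxOn (Set.nonempty_Icc.2 (by norm_num : (-1:ℝ) ≤ 1))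
    ((Polynomial.continuous p).continuousOn (s := Set.Icc (-1:ℝ) 1))
  set M := p.eval xs with hM
  -- bound on I
  set δ : ℝ := π / (8 * ((m:ℝ)+1)) with hδ
  have hδpos : 0 < δ := by positivity
  have hδle : δ ≤ π / 16 := by
    rw [hδ]
    apply div_le_div_of_nonneg_left Real.pi_pos.le (by norm_num)
    nlinarith
  have hδsmall : δ ≤ 0.2 := by linarith [Real.pi_lt_d2, hδle]
  have hsinpos : 0 < Real.sin δ := Real.sin_pos_of_pos_of_lt_pi hδpos
    (by nlinarith [Real.pi_gt_three])
  have hsinlb : 0.99 * δ ≤ Real.sin δ := by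
    have h1 := Real.sin_gt_sub_cube hδpos
    have hsq : δ*δ ≤ 0.04 := by nlinarith
    have hcube : δ^3 ≤ 0.04*δ := by nlinarith [mul_le_mul_of_nonneg_right hsq hδpos.le]
    nlinarith
  have hδrange : δ ≤ π - δ := by nlinarith [Real.pi_gt_three]
  have hM' : ∀ θ : ℝ, g θ ≤ M := fun θ =>
    hmax ⟨Real.neg_one_le_cos θ, Real.cos_le_one θ⟩
  have hgi : ∀ a b : ℝ, IntervalIntegrable g volume a b := fun a b =>
    hgcont.intervalIntegrable a b
  have hgsi : ∀ a b : ℝ, IntervalIntegrable (fun θ => g θ * Real.sin θ) volume a b :=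
    fun a b => (hgcont.mul Real.continuous_sin).intervalIntegrable a b
  have hIle : I ≤ 2 * δ * M + β / Real.sin δ := by
    have hsplit : I = (∫ θ in (0:ℝ)..δ, g θ) + (∫ θ in δ..(π-δ), g θ)
        + (∫ θ in (π-δ)..π, g θ) := by
      rw [hI, ← intervalIntegral.integral_add_adjacent_intervals (hgi 0 (π-δ)) (hgi (π-δ) π),
        ← intervalIntegral.integral_add_adjacent_intervals (hgi 0 δ) (hgi δ (π-δ))]
    have hend1 : (∫ θ in (0:ℝ)..δ, g θ) ≤ δ * M := by
      calc (∫ θ in (0:ℝ)..δ, g θ) ≤ ∫ _ in (0:ℝ)..δ, M :=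
            intervalIntegral.integral_mono_on hδpos.le (hgi 0 δ)
              intervalIntegrable_const (fun θ _ => hM' θ)
        _ = δ * M := by rw [intervalIntegral.integral_const, smul_eq_mul, sub_zero]
    have hend2 : (∫ θ in (π-δ)..π, g θ) ≤ δ * M := by
      calc (∫ θ in (π-δ)..π, g θ) ≤ ∫ _ in (π-δ)..π, M :=
            intervalIntegral.integral_mono_on (by linarith) (hgi _ _)
              intervalIntegrable_const (fun θ _ => hM' θ)
        _ = δ * M := by rw [intervalIntegral.integral_const, smul_eq_mul,
              show π - (π - δ) = δ from by ring]
    have hsinnn : ∀ θ ∈ Set.Icc (0:ℝ) π, 0 ≤ Real.sin θ := fun θ hθ =>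
      Real.sin_nonneg_of_nonneg_of_le_pi hθ.1 hθ.2
    have hgs : ∫ θ in (0:ℝ)..π, g θ * Real.sin θ ≤ β := by
      have hsub := intervalIntegral.integral_comp_smul_deriv
        (f := Real.cos) (f' := fun θ => -Real.sin θ) (g := fun x => p.eval x)
        (a := 0) (b := π)
        (fun θ _ => Real.hasDerivAt_cos θ)
        (Real.continuous_sin.neg.continuousOn) (Polynomial.continuous p)
      simp only [Real.cos_zero, Real.cos_pi, Function.comp_apply] at hsub
      have h1 : (∫ θ in (0:ℝ)..π, (-Real.sin θ) • p.eval (Real.cos θ))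
          = - ∫ θ in (0:ℝ)..π, g θ * Real.sin θ := by
        rw [← intervalIntegral.integral_neg]
        refine intervalIntegral.integral_congr fun θ _ => ?_
        simp [hgdef, smul_eq_mul]
        ring
      have h2 : (∫ x in (1:ℝ)..(-1), p.eval x) = - ∫ x in (-1:ℝ)..1, p.eval x :=
        intervalIntegral.integral_symm _ _
      rw [h1, h2] at hsub
      have := neg_injective hsub
      linarith [hint, this.le, this.ge]
    have hmid : (∫ θ in δ..(π-δ), g θ) ≤ β / Real.sin δ := by
      have hstep1 : (∫ θ in δ..(π-δ), g θ)
          ≤ (Real.sin δ)⁻¹ * ∫ θ in δ..(π-δ), g θ * Real.sin θ := by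
        rw [← intervalIntegral.integral_const_mul]
        apply intervalIntegral.integral_mono_on hδrange (hgi _ _)
          ((continuous_const.mul (hgcont.mul Real.continuous_sin)).intervalIntegrable _ _)
        intro θ hθ
        have hsθ : Real.sin δ ≤ Real.sin θ := by
          rcases le_or_gt θ (π/2) with h | h
          · exact Real.sin_le_sin_of_le_of_le_pi_div_two (by linarith) h hθ.1
          · rw [← Real.sin_pi_sub θ]
            apply Real.sin_le_sin_of_le_of_le_pi_div_two (by linarith) (by linarith)
            linarith [hθ.2]
        have := mul_le_mul_of_nonneg_left hsθ (hgn θ)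
        simp only [Pi.mul_apply]
        rw [inv_mul_eq_div, le_div_iff₀ hsinpos]
        nlinarith
      have hstep2 : (∫ θ in δ..(π-δ), g θ * Real.sin θ)
          ≤ ∫ θ in (0:ℝ)..π, g θ * Real.sin θ := by
        have e : (∫ θ in (0:ℝ)..π, g θ * Real.sin θ)
            = (∫ θ in (0:ℝ)..δ, g θ * Real.sin θ) + (∫ θ in δ..(π-δ), g θ * Real.sin θ)
            + (∫ θ in (π-δ)..π, g θ * Real.sin θ) := by
          rw [← intervalIntegral.integral_add_adjacent_intervals (hgsi 0 (π-δ)) (hgsi (π-δ) π),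
            ← intervalIntegral.integral_add_adjacent_intervals (hgsi 0 δ) (hgsi δ (π-δ))]
        have n1 : 0 ≤ ∫ θ in (0:ℝ)..δ, g θ * Real.sin θ := by
          apply intervalIntegral.integral_nonneg hδpos.le
          intro θ hθ
          exact mul_nonneg (hgn θ) (hsinnn θ ⟨hθ.1, by linarith [hθ.2]⟩)
        have n2 : 0 ≤ ∫ θ in (π-δ)..π, g θ * Real.sin θ := by
          apply intervalIntegral.integral_nonneg (by linarith)
          intro θ hθ
          exact mul_nonneg (hgn θ) (hsinnn θ ⟨by linarith [hθ.1], hθ.2⟩)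
        linarith [e]
      calc (∫ θ in δ..(π-δ), g θ) ≤ (Real.sin δ)⁻¹ * ∫ θ in δ..(π-δ), g θ * Real.sin θ := hstep1
        _ ≤ (Real.sin δ)⁻¹ * β := by
            apply mul_le_mul_of_nonneg_left (hstep2.trans hgs) (by positivity)
        _ = β / Real.sin δ := by rw [inv_mul_eq_div]
    linarith [hsplit, hend1, hend2, hmid]
  -- bootstrap
  have hMle : M ≤ ((m:ℝ)+1) * ((2/π) * I) := hsum xs hxs
  have hkey : ((m:ℝ)+1) * ((2/π) * (2 * δ * M + β / Real.sin δ))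
      = M/2 + (2*((m:ℝ)+1)/π) * (β / Real.sin δ) := by
    rw [hδ]
    field_simp
    ring
  have hM2 : M ≤ M/2 + (2*((m:ℝ)+1)/π) * (β / Real.sin δ) := by
    rw [← hkey]
    refine hMle.trans ?_
    apply mul_le_mul_of_nonneg_left _ (by positivity)
    apply mul_le_mul_of_nonneg_left hIle (by positivity)
  have hMfin : M ≤ 4*((m:ℝ)+1)/π * (β / Real.sin δ) := by
    have h4 : 4*((m:ℝ)+1)/π * (β / Real.sin δ) = 2*(2*((m:ℝ)+1)/π * (β / Real.sin δ)) := by ring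
    linarith
  -- final numeric estimate
  intro x hx
  have hxM : p.eval x ≤ M := hmax hx
  refine hxM.trans (hMfin.trans ?_)
  have hπ1 : (3.14:ℝ) ≤ π := by linarith [Real.pi_gt_d6]
  have hπ2 : π ≤ (3.15:ℝ) := Real.pi_lt_d2.le
  have hs2 : (1.41:ℝ) ≤ Real.sqrt 2 := by
    nlinarith [Real.sq_sqrt (by norm_num : (2:ℝ) ≥ 0), Real.sqrt_nonneg 2]
  have hQ : Real.sqrt 2 + 1 ≤ (Real.sqrt 2 + 1)^m :=
    le_self_pow₀ (by nlinarith) (by omega)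
  -- sin δ ≥ 0.99 * π/(8(m+1))  ⇒  ((m+1)) * sin δ ≥ 0.99π/8
  have hsin2 : ((m:ℝ)+1) * Real.sin δ ≥ 0.99 * π / 8 := by
    have : 0.99 * δ * ((m:ℝ)+1) = 0.99 * π / 8 := by rw [hδ]; field_simp
    nlinarith
  have hrw : 4*((m:ℝ)+1)/π * (β / Real.sin δ) = 4*((m:ℝ)+1)*β/(π * Real.sin δ) := by
    rw [div_mul_div_comm]
  rw [hrw, div_le_iff₀ (by positivity)]
  have hQ' : (2.41:ℝ) ≤ (Real.sqrt 2 + 1)^m := by nlinarith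
  have hA : (1.21:ℝ) ≤ π * (((m:ℝ)+1) * Real.sin δ) := by
    nlinarith [mul_le_mul_of_nonneg_left hsin2.le Real.pi_pos.le, sq_nonneg (π - 3.14)]
  have hB : (4.82:ℝ) ≤ ((m:ℝ)+1) * (Real.sqrt 2 + 1)^m := by nlinarith
  have hC : (5.8:ℝ) ≤ (((m:ℝ)+1) * (Real.sqrt 2 + 1)^m) * (π * (((m:ℝ)+1) * Real.sin δ)) := by
    nlinarith [mul_le_mul hB hA (by norm_num) (by positivity)]
  have htpos : (0:ℝ) < (m:ℝ)+1 := by positivity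
  nlinarith [mul_le_mul_of_nonneg_left hC (mul_pos hβ htpos).le, mul_pos hβ htpos]
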